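/- arXiv:1910.14381 — 2 statements merged into one kernel-verified Lean document; each statement's English description precedes it below -/
import Mathlib

section
/- For any Parikh vector u ∈ ℕ^Σ and any commutative regular expression e, if u ∈ ⟦e⟧ then expr(u) ≤ e is derivable, i.e. expr(u) ∪ e ≡ e. -/
namespace CKAnote

/-- Commutative regular expressions over an alphabet `α`. -/
inductive CRE (α : Type) where
  | zero : CRE α
  | one : CRE α
  | letter : α → CRE α
  | mul : CRE α → CRE α → CRE α
  | union : CRE α → CRE α → CRE α
  | star : CRE α → CRE α

variable {α : Type} [Fintype α] [DecidableEq α]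

/-- Semantics of a commutative regular expression as a set of Parikh vectors. -/
def sem : CRE α → Set (α → ℕ)
  | .zero => ∅
  | .one => {0}
  | .letter a => {Pi.single a 1}
  | .mul e f => {w | ∃ u ∈ sem e, ∃ v ∈ sem f, w = u + v}
  | .union e f => sem e ∪ sem f
  | .star e => ↑(AddSubmonoid.closure (sem e))

/-- Provable equality: the smallest congruence containing the axioms of
commutative Kleene algebra (where `e ≤ f` abbreviates `e ∪ f ≡ f`). -/
inductive CKA : CRE α → CRE α → Prop
  | refl (e : CRE α) : CKA e e
  | symm {e f : CRE α} : CKA e f → CKA f e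
  | trans {e f g : CRE α} : CKA e f → CKA f g → CKA e g
  | mul_congr {e e' f f' : CRE α} : CKA e e' → CKA f f' → CKA (e.mul f) (e'.mul f')
  | union_congr {e e' f f' : CRE α} : CKA e e' → CKA f f' → CKA (e.union f) (e'.union f')
  | star_congr {e e' : CRE α} : CKA e e' → CKA e.star e'.star
  | mul_assoc (e f g : CRE α) : CKA (e.mul (f.mul g)) ((e.mul f).mul g)
  | mul_comm (e f : CRE α) : CKA (e.mul f) (f.mul e)
  | one_mul (e : CRE α) : CKA (CRE.one.mul e) e
  | union_assoc (e f g : CRE α) : CKA (e.union (f.union g)) ((e.union f).union g)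
  | union_comm (e f : CRE α) : CKA (e.union f) (f.union e)
  | union_idem (e : CRE α) : CKA (e.union e) e
  | zero_union (e : CRE α) : CKA (CRE.zero.union e) e
  | zero_mul (e : CRE α) : CKA (CRE.zero.mul e) CRE.zero
  | left_distrib (e f g : CRE α) : CKA (e.mul (f.union g)) ((e.mul f).union (e.mul g))
  | star_unfold (e : CRE α) : CKA ((CRE.one.union (e.mul e.star)).union e.star) e.star
  | star_lfp {e f : CRE α} : CKA ((e.mul f).union f) f → CKA ((e.star.mul f).union f) f

/-- `e ≤ f`, i.e. `e ∪ f ≡ f`. -/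
def leq (e f : CRE α) : Prop := CKA (e.union f) f

/-- `e^n`, the `n`-fold product of `e` with itself. -/
def pow (e : CRE α) : ℕ → CRE α
  | 0 => CRE.one
  | n + 1 => e.mul (pow e n)

/-- `e^{<n}`, i.e. `(e ∪ 1)^(n-1)` for `n > 0` and `0` for `n = 0`. -/
def ltPow (e : CRE α) : ℕ → CRE α
  | 0 => CRE.zero
  | n + 1 => pow (e.union CRE.one) n

/-- Finite union of a list of expressions. -/
def unionList : List (CRE α) → CRE α
  | [] => CRE.zero
  | e :: l => e.union (unionList l)

/-- Finite product of a list of expressions. -/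
def prodList : List (CRE α) → CRE α
  | [] => CRE.one
  | e :: l => e.mul (prodList l)

/-- `expr(u)`: the product over `a ∈ α` of `u a` copies of the letter `a`. -/
noncomputable def exprVec (u : α → ℕ) : CRE α :=
  prodList ((Finset.univ : Finset α).toList.map (fun a => pow (CRE.letter a) (u a)))

/-- The union `⋃_{b ∈ B} expr(b)` for a finite set of Parikh vectors `B`. -/
noncomputable def unionVecs (B : Finset (α → ℕ)) : CRE α :=
  unionList (B.toList.map exprVec)

/-- The linear expression `expr(u) · (⋃_{b ∈ B} expr(b))*`. -/
noncomputable def linExpr (u : α → ℕ) (B : Finset (α → ℕ)) : CRE α :=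
  (exprVec u).mul (unionVecs B).star

/-- A finite set of Parikh vectors is independent when every Parikh vector
admits at most one representation as an `ℕ`-linear combination of its elements. -/
def Independent (B : Finset (α → ℕ)) : Prop :=
  ∀ c d : (α → ℕ) → ℕ, (∑ b ∈ B, c b • b) = (∑ b ∈ B, d b • b) → ∀ b ∈ B, c b = d b

/-- The semilinear expression associated to a list of linear data:
the finite union of the corresponding linear expressions. -/
noncomputable def semiLin (L : List ((α → ℕ) × Finset (α → ℕ))) : CRE α :=
  unionList (L.map (fun p => linExpr p.1 p.2))

/-- The dimension of a semilinear expression: the maximum of the dimensions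
of its linear components. -/
def dimSL (L : List ((α → ℕ) × Finset (α → ℕ))) : ℕ :=
  (L.map (fun p => p.2.card)).foldr max 0

/-- Finitary (star-free) expressions. -/
def NoStar : CRE α → Prop
  | .zero => True
  | .one => True
  | .letter _ => True
  | .mul e f => NoStar e ∧ NoStar f
  | .union e f => NoStar e ∧ NoStar f
  | .star _ => False

/-- Coordinatewise embedding of `ℕ^α` into `ℚ^α`. -/
def toQ (v : α → ℕ) : α → ℚ := fun a => (v a : ℚ)

section Aux

lemma leq_of_cka {e f : CRE α} (h : CKA e f) : leq e f :=
  (CKA.union_congr h (CKA.refl f)).trans (CKA.union_idem f)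

lemma leq_refl (e : CRE α) : leq e e := CKA.union_idem e

lemma leq_trans {e f g : CRE α} (h1 : leq e f) (h2 : leq f g) : leq e g := by
  unfold leq at *
  have h3 : CKA (e.union g) (e.union (f.union g)) :=
    CKA.union_congr (CKA.refl e) h2.symm
  exact h3.trans ((CKA.union_assoc _ _ _).trans
    ((CKA.union_congr h1 (CKA.refl g)).trans h2))

lemma leq_congr_left {e e' f : CRE α} (h : CKA e e') (h2 : leq e' f) : leq e f :=
  (CKA.union_congr h (CKA.refl f)).trans h2

lemma leq_union_left (e f : CRE α) : leq e (e.union f) :=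
  (CKA.union_assoc e e f).trans (CKA.union_congr (CKA.union_idem e) (CKA.refl f))

lemma leq_union_right (e f : CRE α) : leq f (e.union f) :=
  leq_trans (leq_union_left f e) (leq_of_cka (CKA.union_comm f e))

lemma cka_right_distrib (e f g : CRE α) :
    CKA ((e.union f).mul g) ((e.mul g).union (f.mul g)) :=
  (CKA.mul_comm _ _).trans ((CKA.left_distrib g e f).trans
    (CKA.union_congr (CKA.mul_comm g e) (CKA.mul_comm g f)))

lemma mul_leq_mul {e e' f f' : CRE α} (h1 : leq e e') (h2 : leq f f') :
    leq (e.mul f) (e'.mul f') := by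
  have s1 : leq (e.mul f) (e'.mul f) :=
    (cka_right_distrib e e' f).symm.trans (CKA.mul_congr h1 (CKA.refl f))
  have s2 : leq (e'.mul f) (e'.mul f') :=
    (CKA.left_distrib e' f f').symm.trans (CKA.mul_congr (CKA.refl e') h2)
  exact leq_trans s1 s2

lemma cka_mul_one (e : CRE α) : CKA (e.mul CRE.one) e :=
  (CKA.mul_comm _ _).trans (CKA.one_mul e)

lemma one_le_star (e : CRE α) : leq CRE.one e.star :=
  leq_trans (leq_union_left _ _) (CKA.star_unfold e)

lemma mul_star_le_star (e : CRE α) : leq (e.mul e.star) e.star :=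
  leq_trans (leq_union_right _ _) (CKA.star_unfold e)

lemma le_star (e : CRE α) : leq e e.star := by
  have h1 : leq (e.mul CRE.one) (e.mul e.star) :=
    mul_leq_mul (leq_refl e) (one_le_star e)
  exact leq_trans (leq_congr_left (cka_mul_one e).symm h1) (mul_star_le_star e)

lemma star_mul_star_le_star (e : CRE α) : leq (e.star.mul e.star) e.star :=
  CKA.star_lfp (mul_star_le_star e)

lemma mul_mul_mul_comm (a b c d : CRE α) :
    CKA ((a.mul b).mul (c.mul d)) ((a.mul c).mul (b.mul d)) := by
  refine (CKA.mul_assoc a b (c.mul d)).symm.trans ?_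
  refine (CKA.mul_congr (CKA.refl a) (CKA.mul_assoc b c d)).trans ?_
  refine (CKA.mul_congr (CKA.refl a)
    (CKA.mul_congr (CKA.mul_comm b c) (CKA.refl d))).trans ?_
  refine (CKA.mul_congr (CKA.refl a) (CKA.mul_assoc c b d).symm).trans ?_
  exact CKA.mul_assoc a c (b.mul d)

lemma prodList_append (l1 l2 : List (CRE α)) :
    CKA (prodList (l1 ++ l2)) ((prodList l1).mul (prodList l2)) := by
  induction l1 with
  | nil => exact (CKA.one_mul _).symm
  | cons x l ih =>
      exact (CKA.mul_congr (CKA.refl x) ih).trans (CKA.mul_assoc x _ _)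

lemma prod_map_congr {β : Type} (l : List β) (f g : β → CRE α)
    (h : ∀ x ∈ l, CKA (f x) (g x)) :
    CKA (prodList (l.map f)) (prodList (l.map g)) := by
  induction l with
  | nil => exact CKA.refl _
  | cons x l ih =>
      exact CKA.mul_congr (h x List.mem_cons_self)
        (ih fun y hy => h y (List.mem_cons_of_mem x hy))

lemma prod_map_one {β : Type} (l : List β) (f : β → CRE α)
    (h : ∀ x ∈ l, CKA (f x) CRE.one) :
    CKA (prodList (l.map f)) CRE.one := by
  induction l with
  | nil => exact CKA.refl _
  | cons x l ih =>
      exact (CKA.mul_congr (h x List.mem_cons_self)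
        (ih fun y hy => h y (List.mem_cons_of_mem x hy))).trans (CKA.one_mul _)

lemma prod_map_mul {β : Type} (l : List β) (f g : β → CRE α) :
    CKA (prodList (l.map fun b => (f b).mul (g b)))
      ((prodList (l.map f)).mul (prodList (l.map g))) := by
  induction l with
  | nil => exact (CKA.one_mul _).symm
  | cons x l ih =>
      exact (CKA.mul_congr (CKA.refl _) ih).trans
        (mul_mul_mul_comm (f x) (g x) _ _)

lemma cka_pow_add (e : CRE α) (m n : ℕ) :
    CKA (pow e (m + n)) ((pow e m).mul (pow e n)) := by
  induction n with
  | zero => exact (cka_mul_one _).symm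
  | succ n ih =>
      show CKA (e.mul (pow e (m + n))) ((pow e m).mul (e.mul (pow e n)))
      refine (CKA.mul_congr (CKA.refl e) ih).trans ?_
      refine (CKA.mul_assoc e _ _).trans ?_
      refine (CKA.mul_congr (CKA.mul_comm e _) (CKA.refl _)).trans ?_
      exact (CKA.mul_assoc _ e _).symm

lemma exprVec_add (u v : α → ℕ) :
    CKA (exprVec (u + v)) ((exprVec u).mul (exprVec v)) := by
  unfold exprVec
  refine (prod_map_congr _ _ (fun a => (pow (CRE.letter a) (u a)).mul
    (pow (CRE.letter a) (v a))) (fun a _ => cka_pow_add _ _ _)).trans ?_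
  exact prod_map_mul _ _ _

lemma exprVec_zero : CKA (exprVec (0 : α → ℕ)) CRE.one := by
  unfold exprVec
  exact prod_map_one _ _ (fun a _ => CKA.refl _)

lemma exprVec_single (a : α) : CKA (exprVec (Pi.single a (1 : ℕ))) (CRE.letter a) := by
  unfold exprVec
  obtain ⟨s, t, hst⟩ := List.append_of_mem (Finset.mem_toList.2 (Finset.mem_univ a))
  have hnd : ((Finset.univ : Finset α).toList).Nodup := Finset.nodup_toList _
  rw [hst] at hnd ⊢
  rw [List.nodup_append] at hnd
  have has : a ∉ s := fun h => hnd.2.2 a h a List.mem_cons_self rfl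
  have hat : a ∉ t := (List.nodup_cons.1 hnd.2.1).1
  set f : α → CRE α := fun b => pow (CRE.letter b) ((Pi.single a 1 : α → ℕ) b) with hf
  have hone : ∀ b, b ≠ a → CKA (f b) CRE.one := by
    intro b hb
    have hb0 : (Pi.single a 1 : α → ℕ) b = 0 := Pi.single_eq_of_ne hb 1
    simp only [hf, hb0]
    exact CKA.refl _
  have hfa : CKA (f a) (CRE.letter a) := by
    simp only [hf, Pi.single_eq_same]
    exact cka_mul_one _
  rw [List.map_append]
  refine (prodList_append _ _).trans ?_
  have h1 : CKA (prodList (s.map f)) CRE.one :=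
    prod_map_one _ _ (fun x hx => hone x (fun h => has (h ▸ hx)))
  have h2 : CKA (prodList ((a :: t).map f)) (CRE.letter a) := by
    show CKA ((f a).mul (prodList (t.map f))) _
    refine (CKA.mul_congr hfa
      (prod_map_one _ _ (fun x hx => hone x (fun h => hat (h ▸ hx))))).trans ?_
    exact cka_mul_one _
  exact (CKA.mul_congr h1 h2).trans (CKA.one_mul _)

end Aux

/-- If `u ∈ ⟦e⟧` then `expr(u) ≤ e` is derivable. -/
theorem ax_mem (u : α → ℕ) (e : CRE α) (h : u ∈ sem e) :
    leq (exprVec u) e := by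
  induction e generalizing u with
  | zero => exact absurd h (Set.notMem_empty u)
  | one =>
      have : u = 0 := h
      subst this
      exact leq_of_cka exprVec_zero
  | letter a =>
      have : u = Pi.single a 1 := h
      subst this
      exact leq_of_cka (exprVec_single a)
  | mul e f ihe ihf =>
      obtain ⟨x, hx, y, hy, rfl⟩ := h
      exact leq_congr_left (exprVec_add x y) (mul_leq_mul (ihe x hx) (ihf y hy))
  | union e f ihe ihf =>
      rcases h with h | h
      · exact leq_trans (ihe u h) (leq_union_left e f)
      · exact leq_trans (ihf u h) (leq_union_right e f)
  | star e ihe =>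
      have h' : u ∈ AddSubmonoid.closure (sem e) := h
      clear h
      induction h' using AddSubmonoid.closure_induction with
      | mem x hx => exact leq_trans (ihe x hx) (le_star e)
      | zero => exact leq_trans (leq_of_cka exprVec_zero) (one_le_star e)
      | add x y _ _ hx hy =>
          exact leq_trans (leq_congr_left (exprVec_add x y) (mul_leq_mul hx hy))
            (star_mul_star_le_star e)

end CKAnote
end

section
/- A finite set B of Parikh vectors in ℕ^Σ is independent (every Parikh vector admits at most one representation as an ℕ-linear combination of the elements of B) if and only if the images of the elements of B under the coordinatewise embedding ℕ^Σ → ℚ^Σ form a linearly independent family in the ℚ-vector space ℚ^Σ. -/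
namespace CKAnote

variable {α : Type} [Fintype α] [DecidableEq α]

/-- A finite set of Parikh vectors is independent iff its image under the
coordinatewise embedding `ℕ^α → ℚ^α` is linearly independent over `ℚ`. -/
theorem independent_iff_linearIndependent (B : Finset (α → ℕ)) :
    Independent B ↔
      LinearIndependent ℚ (fun b : ↥B => toQ (b : α → ℕ)) := by
  rw [Fintype.linearIndependent_iff]
  constructor
  · intro hInd g hg
    set N : ℕ := ∏ i : ↥B, (g i).den with hN
    have hNpos : 0 < N := Finset.prod_pos (fun i _ => (g i).pos)
    have hz : ∀ i : ↥B, ∃ z : ℤ, g i * (N : ℚ) = (z : ℚ) := by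
      intro i
      obtain ⟨M, hM⟩ := Finset.dvd_prod_of_mem (fun i => ((g i).den : ℕ)) (Finset.mem_univ i)
      refine ⟨(g i).num * M, ?_⟩
      rw [show (N : ℚ) = ((g i).den : ℚ) * (M : ℚ) by exact_mod_cast congrArg Nat.cast hM,
        ← mul_assoc, Rat.mul_den_eq_num]
      push_cast
      ring
    choose z hzeq using hz
    -- key: for every a, ∑ i, z i * (i : α → ℕ) a = 0 in ℤ
    have key : ∀ a : α, (∑ i : ↥B, z i * ((i : α → ℕ) a : ℤ)) = 0 := by
      intro a
      have h1 : (∑ i : ↥B, g i * ((i : α → ℕ) a : ℚ)) = 0 := by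
        have := congrFun hg a
        simpa [toQ, Finset.sum_apply, Pi.smul_apply, smul_eq_mul] using this
      have h2 : (∑ i : ↥B, (z i : ℚ) * ((i : α → ℕ) a : ℚ)) = 0 := by
        calc (∑ i : ↥B, (z i : ℚ) * ((i : α → ℕ) a : ℚ))
            = (∑ i : ↥B, g i * ((i : α → ℕ) a : ℚ)) * (N : ℚ) := by
              rw [Finset.sum_mul]
              refine Finset.sum_congr rfl (fun i _ => ?_)
              rw [← hzeq i]; ring
          _ = 0 := by rw [h1, zero_mul]
      exact_mod_cast h2
    classical
    set c : (α → ℕ) → ℕ := fun v => if h : v ∈ B then (z ⟨v, h⟩).toNat else 0 with hc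
    set d : (α → ℕ) → ℕ := fun v => if h : v ∈ B then (-(z ⟨v, h⟩)).toNat else 0 with hd
    have hsum : (∑ b ∈ B, c b • b) = (∑ b ∈ B, d b • b) := by
      funext a
      have hcast : ((∑ b ∈ B, c b • b) a : ℤ) = ((∑ b ∈ B, d b • b) a : ℤ) := by
        have e1 : ((∑ b ∈ B, c b • b) a : ℤ) = ∑ i : ↥B, ((z i).toNat : ℤ) * ((i : α → ℕ) a : ℤ) := by
          rw [← Finset.sum_coe_sort B (fun b => c b • b)]
          push_cast [Finset.sum_apply, Pi.smul_apply, smul_eq_mul]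
          refine Finset.sum_congr rfl (fun i _ => ?_)
          simp [hc, i.2]
        have e2 : ((∑ b ∈ B, d b • b) a : ℤ) = ∑ i : ↥B, ((-(z i)).toNat : ℤ) * ((i : α → ℕ) a : ℤ) := by
          rw [← Finset.sum_coe_sort B (fun b => d b • b)]
          push_cast [Finset.sum_apply, Pi.smul_apply, smul_eq_mul]
          refine Finset.sum_congr rfl (fun i _ => ?_)
          simp [hd, i.2]
        rw [e1, e2, ← sub_eq_zero, ← Finset.sum_sub_distrib]
        rw [← key a]
        refine Finset.sum_congr rfl (fun i _ => ?_)
        have : ((z i).toNat : ℤ) - ((-(z i)).toNat : ℤ) = z i := by omega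
        rw [← sub_mul, this]
      exact_mod_cast hcast
    intro i
    have := hInd c d hsum (i : α → ℕ) i.2
    have hzi : z i = 0 := by
      simp only [hc, hd, dif_pos i.2, Subtype.coe_eta] at this
      omega
    have : g i * (N : ℚ) = 0 := by rw [hzeq i, hzi]; norm_num
    have hN0 : (N : ℚ) ≠ 0 := by positivity
    exact (mul_eq_zero.mp this).resolve_right hN0
  · intro hLI c d hsum i hi
    set g : ↥B → ℚ := fun i => (c i : ℚ) - (d i : ℚ) with hg
    have h0 : (∑ i : ↥B, g i • toQ (i : α → ℕ)) = 0 := by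
      funext a
      have := congrFun hsum a
      have hcast : (∑ b ∈ B, (c b : ℚ) * ((b a : ℕ) : ℚ)) = ∑ b ∈ B, (d b : ℚ) * ((b a : ℕ) : ℚ) := by
        exact_mod_cast congrArg (Nat.cast : ℕ → ℚ) (by simpa [Finset.sum_apply, Pi.smul_apply, smul_eq_mul] using this)
      simp only [Finset.sum_apply, Pi.smul_apply, smul_eq_mul, toQ, hg, Pi.zero_apply, sub_mul]
      rw [Finset.sum_sub_distrib, Finset.sum_coe_sort B (fun b => (c b : ℚ) * (b a : ℚ)),
        Finset.sum_coe_sort B (fun b => (d b : ℚ) * (b a : ℚ))]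
      rw [sub_eq_zero]
      exact hcast
    have := hLI g h0 ⟨i, hi⟩
    have : (c i : ℚ) = d i := by simpa [hg, sub_eq_zero] using this
    exact_mod_cast this


end CKAnote
end
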